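/- For every integer k, the class of graphs with maximum matching width at most k is closed under taking minors (deleting vertices, deleting edges, and contracting edges). -/

import Mathlib

open SimpleGraph

/-- Size of a maximum matching in the bipartite graph of edges of `G` crossing `(A, Aᶜ)`. -/
noncomputable def mmVal {V : Type*} (G : SimpleGraph V) (A : Set V) : ℕ :=
  sSup {n | ∃ M : Finset (V × V),
    (∀ p ∈ M, p.1 ∈ A ∧ p.2 ∉ A ∧ G.Adj p.1 p.2) ∧
    (∀ p ∈ M, ∀ q ∈ M, p ≠ q → p.1 ≠ q.1 ∧ p.2 ≠ q.2) ∧ M.card = n}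

/-- A branch-decomposition over the vertex set of `G`: a finite subcubic tree together with a
bijection between its leaves and the vertices of `G`. -/
structure BranchDecomp {V : Type*} (G : SimpleGraph V) where
  B : Type
  finB : Finite B
  T : SimpleGraph B
  isTree : T.IsTree
  subcubic : ∀ b : B, (T.neighborSet b).ncard = 1 ∨ (T.neighborSet b).ncard = 3
  L : {b : B // (T.neighborSet b).ncard = 1} ≃ V

/-- The set of vertices of `G` whose leaves lie on the `u`-side of the tree edge `uw`. -/
noncomputable def BranchDecomp.side {V : Type*} {G : SimpleGraph V} (D : BranchDecomp G)
    (u w : D.B) : Set V :=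
  {x : V | (D.T.deleteEdges {s(u, w)}).Reachable (D.L.symm x).1 u}

/-- The width of a branch-decomposition is at most `k`. -/
def BranchDecomp.widthLE {V : Type*} {G : SimpleGraph V} (D : BranchDecomp G) (k : ℕ) : Prop :=
  ∀ u w : D.B, D.T.Adj u w → mmVal G (D.side u w) ≤ k

/-- The maximum matching width of `G`. -/
noncomputable def mmw {V : Type*} (G : SimpleGraph V) : ℕ :=
  sInf {k | ∃ D : BranchDecomp G, D.widthLE k}
/-- `H` is a minor of `G`: there is a family of nonempty, pairwise disjoint, connected branch
sets in `G` indexed by the vertices of `H`, with edges of `H` realized by edges of `G`. -/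
def IsMinor {W : Type*} {V : Type*} (H : SimpleGraph W) (G : SimpleGraph V) : Prop :=
  ∃ φ : W → Set V,
    (∀ w, (φ w).Nonempty) ∧
    (∀ w, (G.induce (φ w)).Connected) ∧
    (∀ w w', w ≠ w' → Disjoint (φ w) (φ w')) ∧
    (∀ w w', H.Adj w w' → ∃ a ∈ φ w, ∃ b ∈ φ w', G.Adj a b)

/-- The `k × k` grid graph: vertices `(i, j)`, edges between vertices at Manhattan distance 1. -/
def gridGraph (k : ℕ) : SimpleGraph (Fin k × Fin k) :=
  SimpleGraph.fromRel (fun p q =>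
    (p.1 = q.1 ∧ (p.2 : ℕ) + 1 = (q.2 : ℕ)) ∨ (p.2 = q.2 ∧ (p.1 : ℕ) + 1 = (q.1 : ℕ)))

/-- The row `R_j` of the `k × k` grid. -/
def gridRow (k : ℕ) (j : Fin k) : Set (Fin k × Fin k) := {p | p.2 = j}

/-- The column `C_i` of the `k × k` grid. -/
def gridCol (k : ℕ) (i : Fin k) : Set (Fin k × Fin k) := {p | p.1 = i}

/-- `X` is small: `mm(X) < k` and `X` contains no full row. -/
def GridSmall (k : ℕ) (X : Set (Fin k × Fin k)) : Prop :=
  mmVal (gridGraph k) X < k ∧ ∀ j : Fin k, ¬ gridRow k j ⊆ X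

/-- `G` is `k`-connected: `|V(G)| ≥ k` and deleting fewer than `k` vertices leaves `G`
connected. -/
def KConnected {V : Type*} (k : ℕ) (G : SimpleGraph V) : Prop :=
  k ≤ Nat.card V ∧ ∀ X : Set V, X.ncard < k → (G.induce Xᶜ).Connected

/-- A block of `G`: a bridge (with its two endpoints), or a maximal 2-connected induced
subgraph. -/
def IsBlock {V : Type*} (G : SimpleGraph V) (Bs : Set V) : Prop :=
  (∃ a b : V, G.Adj a b ∧ G.IsBridge s(a, b) ∧ Bs = {a, b}) ∨
  (KConnected 2 (G.induce Bs) ∧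
    ∀ B' : Set V, Bs ⊆ B' → KConnected 2 (G.induce B') → B' = Bs)

/-- A tree-representation of `G`: a finite subcubic tree `T` and nontrivial subtrees `F x`
for each vertex `x` such that adjacent vertices have intersecting subtrees. -/
structure TreeRep {V : Type*} (G : SimpleGraph V) where
  B : Type
  finB : Finite B
  T : SimpleGraph B
  isTree : T.IsTree
  subcubic : ∀ b : B, (T.neighborSet b).ncard = 1 ∨ (T.neighborSet b).ncard = 3
  F : V → Set B
  nontrivial : ∀ x : V, ∃ u w : B, u ∈ F x ∧ w ∈ F x ∧ T.Adj u w
  subtree : ∀ x : V, (T.induce (F x)).Connected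
  adjMeet : ∀ x y : V, G.Adj x y → (F x ∩ F y).Nonempty

/-- Every edge of the tree lies in at most `k` of the subtrees. -/
def TreeRep.widthLE {V : Type*} {G : SimpleGraph V} (R : TreeRep G) (k : ℕ) : Prop :=
  ∀ u w : R.B, R.T.Adj u w → {x : V | u ∈ R.F x ∧ w ∈ R.F x}.ncard ≤ k

/-- Contraction of the edge `uv` of `G` (the merged vertex is `u`). -/
def contractEdge {V : Type*} (G : SimpleGraph V) (u v : V) : SimpleGraph {x : V // x ≠ v} :=
  SimpleGraph.fromRel (fun x y =>
    G.Adj x.1 y.1 ∨ (x.1 = u ∧ G.Adj v y.1) ∨ (y.1 = u ∧ G.Adj v x.1))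


lemma reach_transfer {α β : Type*} {G : SimpleGraph α} {G' : SimpleGraph β} (f : α → β)
    (h : ∀ ⦃x y⦄, G.Adj x y → G'.Reachable (f x) (f y)) {x y : α} (hr : G.Reachable x y) :
    G'.Reachable (f x) (f y) := by
  obtain ⟨p⟩ := hr
  induction p with
  | nil => exact Reachable.refl _
  | cons ha q ih => exact (h ha).trans ih

lemma reach_isolated {α : Type*} {G : SimpleGraph α} {x y : α} (h : ∀ z, ¬ G.Adj x z)
    (hr : G.Reachable x y) : x = y := by
  obtain ⟨p⟩ := hr
  cases p with
  | nil => rfl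
  | cons ha q => exact absurd ha (h _)

lemma tree_edge_not_reach {α : Type*} {G : SimpleGraph α} (hT : G.IsTree) {u w : α}
    (h : G.Adj u w) : ¬ (G.deleteEdges {s(u,w)}).Reachable u w :=
  ((isAcyclic_iff_forall_adj_isBridge.mp hT.2 h) : _)

def matchSet {V : Type*} (G : SimpleGraph V) (A : Set V) : Set ℕ :=
  {n | ∃ M : Finset (V × V),
    (∀ p ∈ M, p.1 ∈ A ∧ p.2 ∉ A ∧ G.Adj p.1 p.2) ∧
    (∀ p ∈ M, ∀ q ∈ M, p ≠ q → p.1 ≠ q.1 ∧ p.2 ≠ q.2) ∧ M.card = n}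

lemma mmVal_def {V : Type*} (G : SimpleGraph V) (A : Set V) :
    mmVal G A = sSup (matchSet G A) := rfl

lemma zero_mem_matchSet {V : Type*} (G : SimpleGraph V) (A : Set V) :
    0 ∈ matchSet G A := ⟨∅, by simp⟩

lemma matchSet_le {V : Type*} [Finite V] {G : SimpleGraph V} {A : Set V} {n : ℕ}
    (h : n ∈ matchSet G A) : n ≤ Nat.card V := by
  classical
  have := Fintype.ofFinite V
  obtain ⟨M, -, hdist, hcard⟩ := h
  have hinj : Set.InjOn Prod.fst (M : Set (V × V)) := by
    intro p hp q hq hpq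
    by_contra hne
    exact (hdist p hp q hq hne).1 hpq
  have : M.card = (M.image Prod.fst).card := (Finset.card_image_of_injOn hinj).symm
  rw [← hcard, this, Nat.card_eq_fintype_card]
  exact Finset.card_le_univ _

lemma le_mmVal {V : Type*} [Finite V] {G : SimpleGraph V} {A : Set V} {n : ℕ}
    (h : n ∈ matchSet G A) : n ≤ mmVal G A :=
  le_csSup ⟨Nat.card V, fun _ hm => matchSet_le hm⟩ h

lemma mmVal_le {V : Type*} {G : SimpleGraph V} {A : Set V} {m : ℕ}
    (h : ∀ n ∈ matchSet G A, n ≤ m) : mmVal G A ≤ m :=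
  csSup_le ⟨0, zero_mem_matchSet G A⟩ h

lemma mmVal_le_card {V : Type*} [Finite V] (G : SimpleGraph V) (A : Set V) :
    mmVal G A ≤ Nat.card V :=
  mmVal_le fun _ hn => matchSet_le hn

lemma walk_cross {V : Type*} {G : SimpleGraph V} (A : Set V) {x y : V} (p : G.Walk x y)
    (hx : x ∈ A) (hy : y ∉ A) :
    ∃ a b, G.Adj a b ∧ a ∈ A ∧ b ∉ A ∧ a ∈ p.support ∧ b ∈ p.support := by
  induction p with
  | nil => exact absurd hx hy
  | @cons u v w ha q ih =>
    by_cases hv : v ∈ A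
    · obtain ⟨a, b, h1, h2, h3, h4, h5⟩ := ih hv hy
      exact ⟨a, b, h1, h2, h3, by simp [h4], by simp [h5]⟩
    · exact ⟨u, v, ha, hx, hv, by simp, by simp⟩

lemma induce_walk {V : Type*} {G : SimpleGraph V} {s : Set V} (h : (G.induce s).Connected)
    {a b : V} (ha : a ∈ s) (hb : b ∈ s) :
    ∃ p : G.Walk a b, ∀ v ∈ p.support, v ∈ s := by
  obtain ⟨q⟩ := h.preconnected ⟨a, ha⟩ ⟨b, hb⟩
  refine ⟨q.map (SimpleGraph.Embedding.induce s).toHom, ?_⟩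
  intro v hv
  have hv2 : v ∈ (q.map (SimpleGraph.Embedding.induce s).toHom).support := hv
  rw [Walk.support_map, List.mem_map] at hv2
  obtain ⟨⟨v', hv'⟩, -, rfl⟩ := hv2
  exact hv'

lemma leaf_count {B : Type*} [Fintype B] {T : SimpleGraph B} (hT : T.IsTree)
    (hsub : ∀ b : B, (T.neighborSet b).ncard = 1 ∨ (T.neighborSet b).ncard = 3) :
    2 * Nat.card {b : B // (T.neighborSet b).ncard = 1} = Fintype.card B + 2 := by
  classical
  have hdeg : ∀ b : B, (T.neighborSet b).ncard = T.degree b := by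
    intro b
    rw [Set.ncard_eq_toFinset_card']
    rfl
  have hsum : ∑ v, T.degree v = 2 * T.edgeFinset.card := T.sum_degrees_eq_twice_card_edges
  have hedge : T.edgeFinset.card + 1 = Fintype.card B := hT.card_edgeFinset
  set S : Finset B := Finset.univ.filter (fun b => (T.neighborSet b).ncard = 1) with hS
  have hcardS : Nat.card {b : B // (T.neighborSet b).ncard = 1} = S.card := by
    rw [Nat.card_eq_fintype_card, Fintype.card_subtype]
  have hsplit : ∑ v, T.degree v = S.card * 1 + (Finset.univ \ S).card * 3 := by
    rw [← Finset.sum_filter_add_sum_filter_not Finset.univ (fun b => (T.neighborSet b).ncard = 1)]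
    have h1 : ∑ v ∈ S, T.degree v = S.card * 1 := by
      rw [Finset.sum_congr rfl (fun v hv => ?_), Finset.sum_const, smul_eq_mul]
      rw [← hdeg v]
      exact (Finset.mem_filter.mp hv).2
    have h2 : ∑ v ∈ Finset.univ.filter (fun b => ¬ (T.neighborSet b).ncard = 1), T.degree v
        = (Finset.univ \ S).card * 3 := by
      rw [Finset.sum_congr rfl (fun v hv => ?_)]
      · rw [Finset.sum_const, smul_eq_mul, Finset.filter_not, hS]
      · rw [← hdeg v]
        have := (Finset.mem_filter.mp hv).2
        rcases hsub v with h | h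
        · exact absurd h this
        · exact h
    rw [h1, h2]
  have hSle : S.card ≤ Fintype.card B := Finset.card_le_univ S
  have hsd : (Finset.univ \ S).card = Fintype.card B - S.card := by
    rw [Finset.card_sdiff_of_subset (Finset.subset_univ S), Finset.card_univ]
  have hpos : 1 ≤ Fintype.card B := by
    have : Nonempty B := hT.isConnected.nonempty
    exact Fintype.card_pos
  rw [hcardS]
  omega

lemma minor_cut {W V : Type*} [Finite V] {G : SimpleGraph V} {H : SimpleGraph W}
    (φ : W → Set V)
    (hconn : ∀ w, (G.induce (φ w)).Connected)
    (hdisj : ∀ w w', w ≠ w' → Disjoint (φ w) (φ w'))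
    (hadj : ∀ w w', H.Adj w w' → ∃ a ∈ φ w, ∃ b ∈ φ w', G.Adj a b)
    (r : W → V) (hr : ∀ w, r w ∈ φ w) (A : Set V) :
    mmVal H {x | r x ∈ A} ≤ mmVal G A := by
  classical
  apply mmVal_le
  rintro n ⟨M', hM1, hM2, rfl⟩
  rcases M'.eq_empty_or_nonempty with rfl | ⟨p0, hp0⟩
  · simpa using le_mmVal (zero_mem_matchSet G A)
  have key : ∀ p ∈ M', ∃ ab : V × V, G.Adj ab.1 ab.2 ∧ ab.1 ∈ A ∧ ab.2 ∉ A ∧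
      ab.1 ∈ φ p.1 ∪ φ p.2 ∧ ab.2 ∈ φ p.1 ∪ φ p.2 := by
    intro p hp
    obtain ⟨h1, h2, h3⟩ := hM1 p hp
    obtain ⟨a0, ha0, b0, hb0, hab⟩ := hadj p.1 p.2 h3
    obtain ⟨p1, hp1⟩ := induce_walk (hconn p.1) (hr p.1) ha0
    obtain ⟨p2, hp2⟩ := induce_walk (hconn p.2) hb0 (hr p.2)
    obtain ⟨a, b, g1, g2, g3, g4, g5⟩ :=
      walk_cross A (p1.append (Walk.cons hab p2)) h1 h2
    have hmem : ∀ v, v ∈ (p1.append (Walk.cons hab p2)).support → v ∈ φ p.1 ∪ φ p.2 := by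
      intro v hv
      rw [Walk.mem_support_append_iff] at hv
      rcases hv with hv | hv
      · exact Or.inl (hp1 v hv)
      · rw [Walk.support_cons, List.mem_cons] at hv
        rcases hv with rfl | hv
        · exact Or.inl ha0
        · exact Or.inr (hp2 v hv)
    exact ⟨(a, b), g1, g2, g3, hmem a g4, hmem b g5⟩
  have hNV : Nonempty (V × V) := by
    obtain ⟨ab, -⟩ := key p0 hp0
    exact ⟨ab⟩
  set P : W × W → Prop := fun p => ∃ ab : V × V, G.Adj ab.1 ab.2 ∧ ab.1 ∈ A ∧ ab.2 ∉ A ∧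
      ab.1 ∈ φ p.1 ∪ φ p.2 ∧ ab.2 ∈ φ p.1 ∪ φ p.2 with hP
  set f : W × W → V × V := fun p => if h : P p then h.choose else Classical.arbitrary _ with hf
  have hfspec : ∀ p ∈ M', G.Adj (f p).1 (f p).2 ∧ (f p).1 ∈ A ∧ (f p).2 ∉ A ∧
      (f p).1 ∈ φ p.1 ∪ φ p.2 ∧ (f p).2 ∈ φ p.1 ∪ φ p.2 := by
    intro p hp
    have h : P p := key p hp
    simp only [hf, dif_pos h]
    exact h.choose_spec
  -- disjointness of the unions for distinct matching pairs
  have hUdisj : ∀ p ∈ M', ∀ q ∈ M', p ≠ q →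
      Disjoint (φ p.1 ∪ φ p.2) (φ q.1 ∪ φ q.2) := by
    intro p hp q hq hpq
    obtain ⟨hd1, hd2⟩ := hM2 p hp q hq hpq
    have hp1A : r p.1 ∈ A := (hM1 p hp).1
    have hp2A : r p.2 ∉ A := (hM1 p hp).2.1
    have hq1A : r q.1 ∈ A := (hM1 q hq).1
    have hq2A : r q.2 ∉ A := (hM1 q hq).2.1
    have h12 : p.1 ≠ q.2 := fun h => hq2A (h ▸ hp1A)
    have h21 : p.2 ≠ q.1 := fun h => hp2A (h ▸ hq1A)
    rw [Set.disjoint_union_left]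
    constructor <;> rw [Set.disjoint_union_right]
    · exact ⟨hdisj _ _ hd1, hdisj _ _ h12⟩
    · exact ⟨hdisj _ _ h21, hdisj _ _ hd2⟩
  have hfinj : Set.InjOn f (M' : Set (W × W)) := by
    intro p hp q hq hpq
    by_contra hne
    have h1 := (hfspec p hp).2.2.2.1
    have h2 := (hfspec q hq).2.2.2.1
    rw [hpq] at h1
    exact Set.disjoint_left.mp (hUdisj p hp q hq hne) h1 h2
  apply le_mmVal
  refine ⟨M'.image f, ?_, ?_, ?_⟩
  · intro x hx
    rw [Finset.mem_image] at hx
    obtain ⟨p, hp, rfl⟩ := hx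
    obtain ⟨g1, g2, g3, -⟩ := hfspec p hp
    exact ⟨g2, g3, g1⟩
  · intro x hx y hy hxy
    rw [Finset.mem_image] at hx hy
    obtain ⟨p, hp, rfl⟩ := hx
    obtain ⟨q, hq, rfl⟩ := hy
    have hne : p ≠ q := fun h => hxy (by rw [h])
    have hd := hUdisj p hp q hq hne
    constructor
    · intro h
      exact Set.disjoint_left.mp hd (h ▸ (hfspec p hp).2.2.2.1) (hfspec q hq).2.2.2.1
    · intro h
      exact Set.disjoint_left.mp hd (h ▸ (hfspec p hp).2.2.2.2) (hfspec q hq).2.2.2.2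
  · exact Finset.card_image_of_injOn hfinj

section Caterpillar

/-- The edge-relation for extending a subcubic tree by subdividing the edge `ℓc₀`
(with new vertex `inr true`) and attaching a new leaf `inr false`. -/
def extRel {B : Type} (T : SimpleGraph B) (ℓ c₀ : B) : (B ⊕ Bool) → (B ⊕ Bool) → Prop :=
  fun x y => match x, y with
  | Sum.inl a, Sum.inl a' => T.Adj a a' ∧ s(a, a') ≠ s(ℓ, c₀)
  | Sum.inl a, Sum.inr t => t = true ∧ (a = ℓ ∨ a = c₀)
  | Sum.inr s', Sum.inr t => s' = false ∧ t = true
  | Sum.inr _, Sum.inl _ => False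

end Caterpillar

section ExtLemmas

variable {B : Type} {T : SimpleGraph B} {ℓ c₀ : B}

lemma extAdj_inl_inl {a a' : B} :
    (SimpleGraph.fromRel (extRel T ℓ c₀)).Adj (Sum.inl a) (Sum.inl a') ↔
      T.Adj a a' ∧ s(a, a') ≠ s(ℓ, c₀) := by
  rw [SimpleGraph.fromRel_adj]
  simp only [extRel]
  constructor
  · rintro ⟨hne, h | h⟩
    · exact h
    · exact ⟨h.1.symm, fun hh => h.2 ((Sym2.eq_swap).trans hh)⟩
  · intro h
    exact ⟨fun hh => h.1.ne (Sum.inl_injective hh), Or.inl h⟩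

lemma extAdj_inl_inr {a : B} {t : Bool} :
    (SimpleGraph.fromRel (extRel T ℓ c₀)).Adj (Sum.inl a) (Sum.inr t) ↔
      t = true ∧ (a = ℓ ∨ a = c₀) := by
  rw [SimpleGraph.fromRel_adj]
  simp only [extRel]
  constructor
  · rintro ⟨hne, h | h⟩
    · exact h
    · exact absurd h id
  · intro h
    exact ⟨by simp, Or.inl h⟩

lemma extAdj_inr_inl {a : B} {t : Bool} :
    (SimpleGraph.fromRel (extRel T ℓ c₀)).Adj (Sum.inr t) (Sum.inl a) ↔
      t = true ∧ (a = ℓ ∨ a = c₀) := by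
  rw [SimpleGraph.adj_comm]
  exact extAdj_inl_inr

lemma extAdj_inr_inr {t t' : Bool} :
    (SimpleGraph.fromRel (extRel T ℓ c₀)).Adj (Sum.inr t) (Sum.inr t') ↔
      (t = false ∧ t' = true) ∨ (t = true ∧ t' = false) := by
  rw [SimpleGraph.fromRel_adj]
  simp only [extRel]
  constructor
  · rintro ⟨hne, h | h⟩
    · exact Or.inl h
    · exact Or.inr ⟨h.2, h.1⟩
  · rintro (h | h)
    · exact ⟨by simp [h.1, h.2], Or.inl h⟩
    · exact ⟨by simp [h.1, h.2], Or.inr ⟨h.2, h.1⟩⟩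

end ExtLemmas

section ExtLemmas2

variable {B : Type} {T : SimpleGraph B} {ℓ c₀ : B}

lemma extNbr_inr_false :
    (SimpleGraph.fromRel (extRel T ℓ c₀)).neighborSet (Sum.inr false) = {Sum.inr true} := by
  ext z
  cases z with
  | inl a =>
    rw [SimpleGraph.mem_neighborSet, extAdj_inr_inl]
    simp
  | inr t =>
    rw [SimpleGraph.mem_neighborSet, extAdj_inr_inr]
    cases t <;> simp

lemma extNbr_inr_true :
    (SimpleGraph.fromRel (extRel T ℓ c₀)).neighborSet (Sum.inr true) =
      {Sum.inl ℓ, Sum.inl c₀, Sum.inr false} := by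
  ext z
  cases z with
  | inl a =>
    simp only [SimpleGraph.mem_neighborSet, extAdj_inr_inl, Set.mem_insert_iff,
      Set.mem_singleton_iff, Sum.inl.injEq, true_and]
    constructor
    · rintro (rfl | rfl)
      · tauto
      · tauto
    · rintro ((h | h) | h) <;> simp_all
  | inr t =>
    simp only [SimpleGraph.mem_neighborSet, extAdj_inr_inr, Set.mem_insert_iff,
      Set.mem_singleton_iff]
    cases t <;> simp

lemma extNbr_inl_other {a : B} (ha1 : a ≠ ℓ) (ha2 : a ≠ c₀) :
    (SimpleGraph.fromRel (extRel T ℓ c₀)).neighborSet (Sum.inl a) =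
      Sum.inl '' (T.neighborSet a) := by
  ext z
  cases z with
  | inl a' =>
    simp only [SimpleGraph.mem_neighborSet, extAdj_inl_inl, Set.mem_image, Sum.inl.injEq]
    constructor
    · rintro ⟨h, -⟩
      exact ⟨a', h, rfl⟩
    · rintro ⟨x, hx, hxa⟩
      cases hxa
      refine ⟨hx, fun hh => ?_⟩
      rw [Sym2.eq_iff] at hh
      rcases hh with ⟨rfl, rfl⟩ | ⟨rfl, rfl⟩
      · exact ha1 rfl
      · exact ha2 rfl
  | inr t =>
    simp only [SimpleGraph.mem_neighborSet, extAdj_inl_inr, Set.mem_image]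
    constructor
    · rintro ⟨-, rfl | rfl⟩
      · exact absurd rfl ha1
      · exact absurd rfl ha2
    · rintro ⟨x, -, hx⟩
      exact absurd hx (by simp)

lemma extNbr_inl_ℓ (hc₀ : T.neighborSet ℓ = {c₀}) :
    (SimpleGraph.fromRel (extRel T ℓ c₀)).neighborSet (Sum.inl ℓ) = {Sum.inr true} := by
  ext z
  cases z with
  | inl a' =>
    simp only [SimpleGraph.mem_neighborSet, extAdj_inl_inl, Set.mem_singleton_iff]
    constructor
    · rintro ⟨h, hne⟩
      have : a' ∈ T.neighborSet ℓ := h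
      rw [hc₀, Set.mem_singleton_iff] at this
      subst this
      exact absurd rfl hne
    · intro h
      exact absurd h (by simp)
  | inr t =>
    simp only [SimpleGraph.mem_neighborSet, extAdj_inl_inr, Set.mem_singleton_iff]
    constructor
    · rintro ⟨rfl, -⟩
      rfl
    · rintro h
      cases h
      exact ⟨rfl, by tauto⟩

lemma extNbr_inl_c₀ (hne : ℓ ≠ c₀) :
    (SimpleGraph.fromRel (extRel T ℓ c₀)).neighborSet (Sum.inl c₀) =
      Sum.inl '' (T.neighborSet c₀ \ {ℓ}) ∪ {Sum.inr true} := by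
  ext z
  cases z with
  | inl a' =>
    simp only [SimpleGraph.mem_neighborSet, extAdj_inl_inl, Set.mem_union, Set.mem_image,
      Set.mem_diff, Set.mem_singleton_iff, Sum.inl.injEq]
    constructor
    · rintro ⟨h, hs⟩
      refine Or.inl ⟨a', ⟨h, fun hh => ?_⟩, rfl⟩
      subst hh
      exact hs (by rw [Sym2.eq_swap])
    · rintro (⟨x, ⟨hx1, hx2⟩, rfl⟩ | h)
      · refine ⟨hx1, fun hh => ?_⟩
        rw [Sym2.eq_iff] at hh
        rcases hh with ⟨h1, h2⟩ | ⟨h1, h2⟩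
        · exact hne h1.symm
        · exact hx2 h2
      · exact absurd h (by simp)
  | inr t =>
    simp only [SimpleGraph.mem_neighborSet, extAdj_inl_inr, Set.mem_union, Set.mem_image,
      Set.mem_singleton_iff]
    constructor
    · rintro ⟨rfl, -⟩
      exact Or.inr rfl
    · rintro (⟨x, -, hx⟩ | h)
      · exact absurd hx (by simp)
      · cases h
        exact ⟨rfl, by tauto⟩

end ExtLemmas2

section ExtLemmas3

variable {B : Type} {T : SimpleGraph B} {ℓ c₀ : B}

lemma sym2_inl_ne {a b c d : B} (h : s(a, b) ≠ s(c, d)) :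
    s((Sum.inl a : B ⊕ Bool), Sum.inl b) ≠ s(Sum.inl c, Sum.inl d) := by
  intro hh
  apply h
  apply Sym2.map.injective Sum.inl_injective
  rw [Sym2.map_pair_eq, Sym2.map_pair_eq]
  exact hh

lemma ext_connected (hTree : T.IsTree) : (SimpleGraph.fromRel (extRel T ℓ c₀)).Connected := by
  set T' := SimpleGraph.fromRel (extRel T ℓ c₀) with hT'
  have e1 : T'.Adj (Sum.inl ℓ) (Sum.inr true) := extAdj_inl_inr.mpr ⟨rfl, Or.inl rfl⟩
  have e2 : T'.Adj (Sum.inr true) (Sum.inl c₀) := extAdj_inr_inl.mpr ⟨rfl, Or.inr rfl⟩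
  have e3 : T'.Adj (Sum.inr false) (Sum.inr true) := extAdj_inr_inr.mpr (Or.inl ⟨rfl, rfl⟩)
  have hstep : ∀ ⦃x y : B⦄, T.Adj x y → T'.Reachable (Sum.inl x) (Sum.inl y) := by
    intro x y hxy
    by_cases hs : s(x, y) = s(ℓ, c₀)
    · have hr1 : T'.Reachable (Sum.inl ℓ) (Sum.inl c₀) := e1.reachable.trans e2.reachable
      rw [Sym2.eq_iff] at hs
      rcases hs with ⟨rfl, rfl⟩ | ⟨rfl, rfl⟩
      · exact hr1
      · exact hr1.symm
    · exact (extAdj_inl_inl.mpr ⟨hxy, hs⟩).reachable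
  have hto : ∀ z : B ⊕ Bool, T'.Reachable z (Sum.inl ℓ) := by
    intro z
    rcases z with a | t
    · exact reach_transfer Sum.inl hstep (hTree.isConnected.preconnected a ℓ)
    · cases t
      · exact e3.reachable.trans ((e1.reachable).symm)
      · exact e1.reachable.symm
  haveI : Nonempty (B ⊕ Bool) := ⟨Sum.inl ℓ⟩
  exact SimpleGraph.Connected.mk (fun x y => (hto x).trans (hto y).symm)

lemma ext_acyclic (hTree : T.IsTree) (hadj : T.Adj ℓ c₀) :
    (SimpleGraph.fromRel (extRel T ℓ c₀)).IsAcyclic := by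
  set T' := SimpleGraph.fromRel (extRel T ℓ c₀) with hT'
  -- the two main "collapse" arguments
  have main_inl : ∀ x₀ y₀ : B, T.Adj x₀ y₀ → s(x₀, y₀) ≠ s(ℓ, c₀) →
      ¬ (T'.deleteEdges {s(Sum.inl x₀, Sum.inl y₀)}).Reachable (Sum.inl x₀) (Sum.inl y₀) := by
    intro x₀ y₀ hT0 hs0 hreach
    apply tree_edge_not_reach hTree hT0
    have h : ∀ ⦃p q : B ⊕ Bool⦄, (T'.deleteEdges {s(Sum.inl x₀, Sum.inl y₀)}).Adj p q →
        (T.deleteEdges {s(x₀, y₀)}).Reachable (Sum.elim id (fun _ => ℓ) p)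
          (Sum.elim id (fun _ => ℓ) q) := by
      intro p q hpq
      rw [SimpleGraph.deleteEdges_adj] at hpq
      obtain ⟨hpq, hmem⟩ := hpq
      have hstepc : (T.deleteEdges {s(x₀, y₀)}).Reachable c₀ ℓ := by
        refine SimpleGraph.Adj.reachable ?_
        rw [SimpleGraph.deleteEdges_adj]
        refine ⟨hadj.symm, fun hh => ?_⟩
        rw [Set.mem_singleton_iff] at hh
        exact hs0 (((Sym2.eq_swap).trans hh).symm)
      rcases p with a | t <;> rcases q with a' | t'
      · rw [extAdj_inl_inl] at hpq
        refine SimpleGraph.Adj.reachable ?_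
        rw [SimpleGraph.deleteEdges_adj]
        refine ⟨hpq.1, fun hh => ?_⟩
        rw [Set.mem_singleton_iff] at hh
        exact hmem (by rw [Set.mem_singleton_iff]; exact congrArg (Sym2.map Sum.inl) hh)
      · rw [extAdj_inl_inr] at hpq
        rcases hpq.2 with rfl | rfl
        · exact SimpleGraph.Reachable.refl _
        · exact hstepc
      · rw [extAdj_inr_inl] at hpq
        rcases hpq.2 with rfl | rfl
        · exact SimpleGraph.Reachable.refl _
        · exact hstepc.symm
      · exact SimpleGraph.Reachable.refl _
    have := reach_transfer (Sum.elim id (fun _ => ℓ)) h hreach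
    simpa using this
  have main_midl :
      ¬ (T'.deleteEdges {s(Sum.inl ℓ, Sum.inr true)}).Reachable (Sum.inl ℓ) (Sum.inr true) := by
    intro hreach
    · -- collapse inr to c₀ : get reach ℓ c₀ in T minus ℓc₀
      apply tree_edge_not_reach hTree hadj
      have h : ∀ ⦃p q : B ⊕ Bool⦄, (T'.deleteEdges {s(Sum.inl ℓ, Sum.inr true)}).Adj p q →
          (T.deleteEdges {s(ℓ, c₀)}).Reachable (Sum.elim id (fun _ => c₀) p)
            (Sum.elim id (fun _ => c₀) q) := by
        intro p q hpq
        rw [SimpleGraph.deleteEdges_adj] at hpq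
        obtain ⟨hpq, hmem⟩ := hpq
        rcases p with a' | t <;> rcases q with a'' | t'
        · rw [extAdj_inl_inl] at hpq
          exact SimpleGraph.Adj.reachable (by
            rw [SimpleGraph.deleteEdges_adj]
            exact ⟨hpq.1, by simpa using hpq.2⟩)
        · rw [extAdj_inl_inr] at hpq
          obtain ⟨rfl, hc⟩ := hpq
          rcases hc with rfl | rfl
          · exact (hmem rfl).elim
          · exact SimpleGraph.Reachable.refl _
        · rw [extAdj_inr_inl] at hpq
          obtain ⟨rfl, hc⟩ := hpq
          rcases hc with rfl | rfl
          · exact (hmem Sym2.eq_swap).elim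
          · exact SimpleGraph.Reachable.refl _
        · exact SimpleGraph.Reachable.refl _
      have := reach_transfer (Sum.elim id (fun _ => c₀)) h hreach
      simpa using this
  have main_midc :
      ¬ (T'.deleteEdges {s(Sum.inl c₀, Sum.inr true)}).Reachable (Sum.inl c₀) (Sum.inr true) := by
    intro hreach
    · -- a = c₀ : collapse inr to ℓ
      apply tree_edge_not_reach hTree hadj
      have h : ∀ ⦃p q : B ⊕ Bool⦄, (T'.deleteEdges {s(Sum.inl c₀, Sum.inr true)}).Adj p q →
          (T.deleteEdges {s(ℓ, c₀)}).Reachable (Sum.elim id (fun _ => ℓ) p)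
            (Sum.elim id (fun _ => ℓ) q) := by
        intro p q hpq
        rw [SimpleGraph.deleteEdges_adj] at hpq
        obtain ⟨hpq, hmem⟩ := hpq
        rcases p with a' | t <;> rcases q with a'' | t'
        · rw [extAdj_inl_inl] at hpq
          exact SimpleGraph.Adj.reachable (by
            rw [SimpleGraph.deleteEdges_adj]
            exact ⟨hpq.1, by simpa using hpq.2⟩)
        · rw [extAdj_inl_inr] at hpq
          obtain ⟨rfl, hc⟩ := hpq
          rcases hc with rfl | rfl
          · exact SimpleGraph.Reachable.refl _
          · exact (hmem rfl).elim
        · rw [extAdj_inr_inl] at hpq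
          obtain ⟨rfl, hc⟩ := hpq
          rcases hc with rfl | rfl
          · exact SimpleGraph.Reachable.refl _
          · exact (hmem Sym2.eq_swap).elim
        · exact SimpleGraph.Reachable.refl _
      have := reach_transfer (Sum.elim id (fun _ => ℓ)) h hreach
      have h2 : (T.deleteEdges {s(ℓ, c₀)}).Reachable c₀ ℓ := by simpa using this
      exact h2.symm
  have main_pend : ¬ (T'.deleteEdges {s((Sum.inr false : B ⊕ Bool), Sum.inr true)}).Reachable
      (Sum.inr false) (Sum.inr true) := by
    intro hreach
    have hiso : ∀ z, ¬ (T'.deleteEdges {s((Sum.inr false : B ⊕ Bool), Sum.inr true)}).Adj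
        (Sum.inr false) z := by
      intro z hz
      rw [SimpleGraph.deleteEdges_adj] at hz
      obtain ⟨hz, hmem⟩ := hz
      rcases z with a | t
      · rw [extAdj_inr_inl] at hz
        exact Bool.false_ne_true hz.1
      · rw [extAdj_inr_inr] at hz
        rcases hz with ⟨-, rfl⟩ | ⟨h1, -⟩
        · exact hmem rfl
        · exact Bool.false_ne_true h1
    exact Bool.false_ne_true (Sum.inr_injective (reach_isolated hiso hreach))
  -- now the main proof
  rw [SimpleGraph.isAcyclic_iff_forall_adj_isBridge]
  intro x y hxy
  rw [SimpleGraph.isBridge_iff]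
  intro hreach
  have hreach' : (T'.deleteEdges {s(x, y)}).Reachable x y := hreach
  clear hreach
  rcases x with a | t <;> rcases y with a' | t'
  · rw [extAdj_inl_inl] at hxy
    exact main_inl a a' hxy.1 hxy.2 hreach'
  · rw [extAdj_inl_inr] at hxy
    obtain ⟨rfl, hc⟩ := hxy
    rcases hc with h | h <;> rw [h] at hreach'
    · exact main_midl hreach'
    · exact main_midc hreach'
  · rw [extAdj_inr_inl] at hxy
    obtain ⟨rfl, hc⟩ := hxy
    have hsw : s((Sum.inr true : B ⊕ Bool), Sum.inl a') = s(Sum.inl a', Sum.inr true) :=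
      Sym2.eq_swap
    rw [hsw] at hreach'
    replace hreach' := hreach'.symm
    rcases hc with h | h <;> rw [h] at hreach'
    · exact main_midl hreach'
    · exact main_midc hreach'
  · rw [extAdj_inr_inr] at hxy
    rcases hxy with ⟨rfl, rfl⟩ | ⟨rfl, rfl⟩
    · exact main_pend hreach'
    · apply main_pend
      have : s((Sum.inr false : B ⊕ Bool), Sum.inr true) = s(Sum.inr true, Sum.inr false) :=
        Sym2.eq_swap
      rw [this]
      exact hreach'.symm

end ExtLemmas3

section Caterpillar2
lemma exists_subcubic_tree : ∀ n : ℕ, 2 ≤ n → ∃ (B : Type) (_ : Fintype B)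
    (T : SimpleGraph B), T.IsTree ∧
    (∀ b : B, (T.neighborSet b).ncard = 1 ∨ (T.neighborSet b).ncard = 3) ∧
    Nat.card B = 2 * n - 2 := by
  intro n hn
  induction n, hn using Nat.le_induction with
  | base =>
    refine ⟨Fin 2, inferInstance, ⊤, ⟨?_, ?_⟩, ?_, by simp [Nat.card_eq_fintype_card]⟩
    · constructor
      intro x y
      by_cases h : x = y
      · exact h ▸ Reachable.refl x
      · exact ((SimpleGraph.top_adj _ _).mpr h).reachable
    · rw [isAcyclic_iff_forall_adj_isBridge]
      intro x y hxy
      rw [isBridge_iff]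
      intro hreach
      have hiso : ∀ z, ¬((⊤ : SimpleGraph (Fin 2)).deleteEdges {s(x, y)}).Adj x z := by
        intro z hz
        rw [deleteEdges_adj] at hz
        obtain ⟨hadj, hmem⟩ := hz
        apply hmem
        have hzy : z = y := by
          have hx := x.isLt; have hy := y.isLt; have hz2 := z.isLt
          have h1 : x ≠ z := (SimpleGraph.top_adj _ _).mp hadj
          have h2 : x ≠ y := (SimpleGraph.top_adj _ _).mp hxy
          rcases Fin.ext_iff.not.mp h1 with _
          have : (x : ℕ) ≠ z := fun h => h1 (Fin.ext h)
          have : (x : ℕ) ≠ y := fun h => h2 (Fin.ext h)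
          apply Fin.ext
          omega
        rw [hzy]
        exact Set.mem_singleton _
      exact (SimpleGraph.top_adj _ _).mp hxy (reach_isolated hiso hreach)
    · intro b
      left
      apply Set.ncard_eq_one.mpr
      refine ⟨b + 1, ?_⟩
      ext z
      simp only [SimpleGraph.mem_neighborSet, SimpleGraph.top_adj, Set.mem_singleton_iff]
      have hb := b.isLt; have hz := z.isLt
      constructor
      · intro h
        have : (b : ℕ) ≠ z := fun hh => h (Fin.ext hh)
        apply Fin.ext
        rw [Fin.add_def]
        simp only [Fin.val_one]
        omega
      · intro h
        intro hbz
        rw [← hbz] at h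
        have := Fin.ext_iff.mp h
        rw [Fin.add_def] at this
        simp only [Fin.val_one] at this
        omega
  | succ m hm ih =>
    obtain ⟨B, instB, T, hTree, hsub, hcard⟩ := ih
    haveI := instB
    have h2L := leaf_count hTree hsub
    have hcardB : Nat.card B = Fintype.card B := Nat.card_eq_fintype_card
    have hLpos : Nat.card {b : B // (T.neighborSet b).ncard = 1} ≠ 0 := by omega
    have hNE : Nonempty {b : B // (T.neighborSet b).ncard = 1} := (Nat.card_ne_zero.mp hLpos).1
    obtain ⟨⟨ℓ, hℓ⟩⟩ := hNE
    obtain ⟨c₀, hc₀⟩ := Set.ncard_eq_one.mp hℓ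
    have hadj : T.Adj ℓ c₀ := by
      have : c₀ ∈ T.neighborSet ℓ := by rw [hc₀]; exact rfl
      exact this
    refine ⟨B ⊕ Bool, inferInstance, SimpleGraph.fromRel (extRel T ℓ c₀),
      ⟨ext_connected hTree, ext_acyclic hTree hadj⟩, ?_, ?_⟩
    · intro b
      rcases b with a | t
      · by_cases h1 : a = ℓ
        · rw [h1, extNbr_inl_ℓ hc₀]
          left
          exact Set.ncard_singleton _
        · by_cases h2 : a = c₀
          · rw [h2, extNbr_inl_c₀ hadj.ne]
            have hmem : ℓ ∈ T.neighborSet c₀ := hadj.symm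
            have himg : (Sum.inl '' (T.neighborSet c₀ \ {ℓ}) : Set (B ⊕ Bool)).ncard
                = (T.neighborSet c₀).ncard - 1 := by
              rw [Set.ncard_image_of_injective _ Sum.inl_injective,
                Set.ncard_diff_singleton_of_mem hmem]
            have hnot : (Sum.inr true : B ⊕ Bool) ∉ Sum.inl '' (T.neighborSet c₀ \ {ℓ}) := by
              simp
            rw [Set.union_singleton, Set.ncard_insert_of_notMem hnot (Set.toFinite _), himg]
            rcases hsub c₀ with h | h <;> rw [h]
            · left; rfl
            · right; rfl
          · rw [extNbr_inl_other h1 h2, Set.ncard_image_of_injective _ Sum.inl_injective]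
            exact hsub a
      · cases t
        · rw [extNbr_inr_false]
          left
          exact Set.ncard_singleton _
        · rw [extNbr_inr_true]
          right
          refine Set.ncard_eq_three.mpr ⟨Sum.inl ℓ, Sum.inl c₀, Sum.inr false, ?_, ?_, ?_, rfl⟩
          · exact fun hh => hadj.ne (Sum.inl_injective hh)
          · simp
          · simp
    · have hs : Nat.card (B ⊕ Bool) = Nat.card B + Nat.card Bool := Nat.card_sum
      have hb : Nat.card Bool = 2 := by simp [Nat.card_eq_fintype_card]
      omega

end Caterpillar2

section Surgery

lemma sym2_val_eq {B : Type} {pr : B → Prop} {x y u v : Subtype pr}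
    (h : s(x.1, y.1) = s(u.1, v.1)) : s(x, y) = s(u, v) := by
  rw [Sym2.eq_iff] at h ⊢
  rcases h with ⟨h1, h2⟩ | ⟨h1, h2⟩
  · exact Or.inl ⟨Subtype.ext h1, Subtype.ext h2⟩
  · exact Or.inr ⟨Subtype.ext h1, Subtype.ext h2⟩

lemma sym2_val_eq' {B : Type} {pr : B → Prop} {x y u v : Subtype pr}
    (h : s(x, y) = s(u, v)) : s(x.1, y.1) = s(u.1, v.1) := by
  have := congrArg (Sym2.map Subtype.val) h
  rwa [Sym2.map_pair_eq, Sym2.map_pair_eq] at this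

lemma surgery {W : Type} [Finite W] (H : SimpleGraph W) (k : ℕ) (hW : 2 ≤ Nat.card W) :
    ∀ n : ℕ, ∀ (B : Type), Finite B → ∀ (T : SimpleGraph B), Nat.card B ≤ n →
      T.IsTree → (∀ b : B, (T.neighborSet b).ncard = 1 ∨ (T.neighborSet b).ncard = 3) →
      ∀ ι : W → B, Function.Injective ι → (∀ x, (T.neighborSet (ι x)).ncard = 1) →
      (∀ u w : B, T.Adj u w →
        mmVal H {x : W | (T.deleteEdges {s(u, w)}).Reachable (ι x) u} ≤ k) →
      ∃ D : BranchDecomp H, D.widthLE k := by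
  intro n
  induction n with
  | zero =>
    intro B finB T hle hTree hsub ι hinj hleaf hINV
    exfalso
    haveI := finB
    haveI : Nonempty B := hTree.isConnected.nonempty
    have := Nat.card_pos (α := B)
    omega
  | succ n ih =>
    intro B finB T hle hTree hsub ι hinj hleaf hINV
    haveI := finB
    by_cases hsurj : ∀ l : B, (T.neighborSet l).ncard = 1 → ∃ x, ι x = l
    · -- the injection is onto the leaves : we are done
      have hbij : Function.Bijective
          (fun x => (⟨ι x, hleaf x⟩ : {b : B // (T.neighborSet b).ncard = 1})) := by
        constructor
        · intro x y hxy
          exact hinj (congrArg Subtype.val hxy)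
        · intro l
          obtain ⟨x, hx⟩ := hsurj l.1 l.2
          exact ⟨x, Subtype.ext hx⟩
      refine ⟨⟨B, finB, T, hTree, hsub, (Equiv.ofBijective _ hbij).symm⟩, ?_⟩
      intro u w huw
      have hset : BranchDecomp.side (G := H)
            ⟨B, finB, T, hTree, hsub, (Equiv.ofBijective _ hbij).symm⟩ u w
          = {x : W | (T.deleteEdges {s(u, w)}).Reachable (ι x) u} := by
        ext x
        show (T.deleteEdges {s(u, w)}).Reachable ((Equiv.ofBijective _ hbij).symm.symm x).1 u ↔ _
        rw [Equiv.symm_symm]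
        exact Iff.rfl
      show mmVal H _ ≤ k
      rw [hset]
      exact hINV u w huw
    · -- surgery step: remove a junk leaf b together with its degree-3 neighbour c
      classical
      push_neg at hsurj
      obtain ⟨b, hbleaf, hbnot⟩ := hsurj
      obtain ⟨c, hc⟩ := Set.ncard_eq_one.mp hbleaf
      have hbc : T.Adj b c := by
        have : c ∈ T.neighborSet b := by rw [hc]; rfl
        exact this
      have hnbrb : ∀ z, T.Adj b z → z = c := by
        intro z hz
        have : z ∈ T.neighborSet b := hz
        rw [hc] at this
        exact this
      have hcdeg : (T.neighborSet c).ncard = 3 := by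
        rcases hsub c with h1 | h3
        · exfalso
          obtain ⟨c', hc'⟩ := Set.ncard_eq_one.mp h1
          have hb' : b ∈ T.neighborSet c := hbc.symm
          rw [hc'] at hb'
          have hnbrc1 : T.neighborSet c = {b} := by
            rw [hc', show c' = b from hb'.symm]
          have hnbrc : ∀ z, T.Adj c z → z = b := by
            intro z hz
            have : z ∈ T.neighborSet c := hz
            rw [hnbrc1] at this
            exact this
          have hall : ∀ z : B, z = b ∨ z = c := by
            have hgen : ∀ {x z : B} (_ : T.Walk x z), (x = b ∨ x = c) → (z = b ∨ z = c) := by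
              intro x z p
              induction p with
              | nil => exact id
              | cons ha q ihq =>
                intro hx
                apply ihq
                rcases hx with rfl | rfl
                · exact Or.inr (hnbrb _ ha)
                · exact Or.inl (hnbrc _ ha)
            intro z
            obtain ⟨p⟩ := hTree.isConnected.preconnected b z
            exact hgen p (Or.inl rfl)
          have hnt : Nontrivial W := by
            rw [← Finite.one_lt_card_iff_nontrivial]
            omega
          obtain ⟨x, y, hxy⟩ := hnt
          have hx : ι x = c := (hall (ι x)).resolve_left (hbnot x)
          have hy : ι y = c := (hall (ι y)).resolve_left (hbnot y)
          exact hxy (hinj (hx.trans hy.symm))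
        · exact h3
      obtain ⟨d0, e0, f0, h01, h02, h03, hset3⟩ := Set.ncard_eq_three.mp hcdeg
      have hbin : b = d0 ∨ b = e0 ∨ b = f0 := by
        have : b ∈ T.neighborSet c := hbc.symm
        rw [hset3] at this
        simpa using this
      have hdee : ∃ d e : B, d ≠ e ∧ d ≠ b ∧ e ≠ b ∧ T.neighborSet c = {b, d, e} := by
        rcases hbin with h | h | h
        · exact ⟨e0, f0, h03, fun hh => h01 (h.symm.trans hh.symm),
            fun hh => h02 (h.symm.trans hh.symm), by rw [hset3, h]⟩
        · refine ⟨d0, f0, h02, fun hh => h01 (hh.trans h), fun hh => h03 (h.symm.trans hh.symm),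
            ?_⟩
          rw [hset3, h]
          exact Set.insert_comm d0 e0 {f0}
        · refine ⟨d0, e0, h01, fun hh => h02 (hh.trans h), fun hh => h03 (hh.trans h), ?_⟩
          rw [hset3, h]
          ext z
          simp only [Set.mem_insert_iff, Set.mem_singleton_iff]
          tauto
      obtain ⟨d, e, hde, hdb, heb, hnbrc⟩ := hdee
      have hcd : T.Adj c d := by
        have : d ∈ T.neighborSet c := by
          rw [hnbrc]
          exact Set.mem_insert_iff.mpr (Or.inr (Or.inl rfl))
        exact this
      have hce : T.Adj c e := by
        have : e ∈ T.neighborSet c := by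
          rw [hnbrc]
          exact Set.mem_insert_iff.mpr (Or.inr (Or.inr rfl))
        exact this
      have hdc : d ≠ c := hcd.ne.symm
      have hec : e ≠ c := hce.ne.symm
      have hbnec : b ≠ c := hbc.ne
      have hnbrcmem : ∀ z, T.Adj c z → (z = b ∨ z = d ∨ z = e) := by
        intro z hz
        have : z ∈ T.neighborSet c := hz
        rw [hnbrc] at this
        simpa using this
      have hnde : ¬ T.Adj d e := by
        intro hadjde
        apply tree_edge_not_reach hTree hadjde
        have h1 : (T.deleteEdges {s(d, e)}).Adj d c := by
          rw [SimpleGraph.deleteEdges_adj]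
          refine ⟨hcd.symm, fun hh => ?_⟩
          rw [Set.mem_singleton_iff, Sym2.eq_iff] at hh
          rcases hh with ⟨-, h2⟩ | ⟨h2, -⟩
          · exact hec h2.symm
          · exact hde h2
        have h2 : (T.deleteEdges {s(d, e)}).Adj c e := by
          rw [SimpleGraph.deleteEdges_adj]
          refine ⟨hce, fun hh => ?_⟩
          rw [Set.mem_singleton_iff, Sym2.eq_iff] at hh
          rcases hh with ⟨h2, -⟩ | ⟨h2, -⟩
          · exact hdc h2.symm
          · exact hec h2.symm
        exact h1.reachable.trans h2.reachable
      have hιb : ∀ x, ι x ≠ b := hbnot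
      have hιc : ∀ x, ι x ≠ c := by
        intro x hh
        have h1 := hleaf x
        rw [hh, hcdeg] at h1
        omega
      -- the new tree
      let d' : {z : B // z ≠ b ∧ z ≠ c} := ⟨d, hdb, hdc⟩
      let e' : {z : B // z ≠ b ∧ z ≠ c} := ⟨e, heb, hec⟩
      let T' : SimpleGraph {z : B // z ≠ b ∧ z ≠ c} :=
        SimpleGraph.fromRel (fun x y => T.Adj x.1 y.1 ∨ (x.1 = d ∧ y.1 = e))
      have hT'adj : ∀ x y : {z : B // z ≠ b ∧ z ≠ c}, T'.Adj x y ↔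
          (T.Adj x.1 y.1 ∨ (x.1 = d ∧ y.1 = e) ∨ (x.1 = e ∧ y.1 = d)) := by
        intro x y
        show (SimpleGraph.fromRel _).Adj x y ↔ _
        rw [SimpleGraph.fromRel_adj]
        constructor
        · rintro ⟨hne, (h | h) | (h | h)⟩
          · exact Or.inl h
          · exact Or.inr (Or.inl h)
          · exact Or.inl h.symm
          · exact Or.inr (Or.inr ⟨h.2, h.1⟩)
        · intro h
          have hne : x ≠ y := by
            rcases h with h | ⟨h1, h2⟩ | ⟨h1, h2⟩
            · exact fun hh => h.ne (congrArg Subtype.val hh)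
            · exact fun hh => hde (by rw [← h1, ← h2, hh])
            · exact fun hh => hde (by rw [← h1, ← h2, hh])
          rcases h with h | h | h
          · exact ⟨hne, Or.inl (Or.inl h)⟩
          · exact ⟨hne, Or.inl (Or.inr h)⟩
          · exact ⟨hne, Or.inr (Or.inr ⟨h.2, h.1⟩)⟩
      have hadjde' : T'.Adj d' e' := (hT'adj d' e').mpr (Or.inr (Or.inl ⟨rfl, rfl⟩))
      -- the collapse map
      let f : B → {z : B // z ≠ b ∧ z ≠ c} := fun z => if h : z ≠ b ∧ z ≠ c then ⟨z, h⟩ else d'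
      have hfval : ∀ (z : B) (h : z ≠ b ∧ z ≠ c), f z = ⟨z, h⟩ := by
        intro z h
        show (if h' : z ≠ b ∧ z ≠ c then (⟨z, h'⟩ : {z : B // z ≠ b ∧ z ≠ c}) else d') = ⟨z, h⟩
        rw [dif_pos h]
      have hfb : f b = d' := by
        show (if h' : b ≠ b ∧ b ≠ c then (⟨b, h'⟩ : {z : B // z ≠ b ∧ z ≠ c}) else d') = d'
        rw [dif_neg (fun hh => hh.1 rfl)]
      have hfc : f c = d' := by
        show (if h' : c ≠ b ∧ c ≠ c then (⟨c, h'⟩ : {z : B // z ≠ b ∧ z ≠ c}) else d') = d'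
        rw [dif_neg (fun hh => hh.2 rfl)]
      -- upwards transfer
      have hstep : ∀ (E : Set (Sym2 B)) (E' : Set (Sym2 {z : B // z ≠ b ∧ z ≠ c}))
          (hkeep : ∀ x y : {z : B // z ≠ b ∧ z ≠ c}, T.Adj x.1 y.1 → s(x.1, y.1) ∉ E →
            s(x, y) ∉ E')
          (hdeE : s(c, e) ∉ E → s(d', e') ∉ E'),
          ∀ ⦃p q : B⦄, (T.deleteEdges E).Adj p q →
            (T'.deleteEdges E').Reachable (f p) (f q) := by
        intro E E' hkeep hdeE p q hpq
        rw [SimpleGraph.deleteEdges_adj] at hpq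
        obtain ⟨hpq, hmem⟩ := hpq
        by_cases hpb : p = b
        · have hq : q = c := by
            apply hnbrb
            rw [← hpb]
            exact hpq
          rw [hpb, hq, hfb, hfc]
        · by_cases hpc : p = c
          · have hq3 : q = b ∨ q = d ∨ q = e := by
              apply hnbrcmem
              rw [← hpc]
              exact hpq
            rcases hq3 with hq | hq | hq
            · rw [hpc, hq, hfb, hfc]
            · rw [hpc, hq, hfc, hfval d ⟨hdb, hdc⟩]
            · rw [hpc, hq, hfc, hfval e ⟨heb, hec⟩]
              refine SimpleGraph.Adj.reachable ?_
              rw [SimpleGraph.deleteEdges_adj]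
              refine ⟨hadjde', hdeE ?_⟩
              rw [← hpc, ← hq]
              exact hmem
          · by_cases hqb : q = b
            · exfalso
              apply hpc
              apply hnbrb
              rw [← hqb]
              exact hpq.symm
            · by_cases hqc : q = c
              · have hp3 : p = b ∨ p = d ∨ p = e := by
                  apply hnbrcmem
                  rw [← hqc]
                  exact hpq.symm
                rcases hp3 with hp | hp | hp
                · exact absurd hp hpb
                · rw [hp, hqc, hfc, hfval d ⟨hdb, hdc⟩]
                · rw [hp, hqc, hfc, hfval e ⟨heb, hec⟩]
                  refine SimpleGraph.Reachable.symm (SimpleGraph.Adj.reachable ?_)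
                  rw [SimpleGraph.deleteEdges_adj]
                  refine ⟨hadjde', hdeE fun hh => ?_⟩
                  apply hmem
                  rw [hqc, hp]
                  have : s(e, c) = s(c, e) := Sym2.eq_swap
                  rw [this]
                  exact hh
              · rw [hfval p ⟨hpb, hpc⟩, hfval q ⟨hqb, hqc⟩]
                refine SimpleGraph.Adj.reachable ?_
                rw [SimpleGraph.deleteEdges_adj]
                exact ⟨(hT'adj _ _).mpr (Or.inl hpq), hkeep _ _ hpq hmem⟩
      -- downwards transfer
      have hdown : ∀ (E : Set (Sym2 B)) (E' : Set (Sym2 {z : B // z ≠ b ∧ z ≠ c}))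
          (hkeep : ∀ x y : {z : B // z ≠ b ∧ z ≠ c}, T.Adj x.1 y.1 → s(x, y) ∉ E' →
            s(x.1, y.1) ∉ E)
          (hde2 : s(d', e') ∉ E' → (T.deleteEdges E).Reachable d e),
          ∀ ⦃p q : {z : B // z ≠ b ∧ z ≠ c}⦄, (T'.deleteEdges E').Adj p q →
            (T.deleteEdges E).Reachable p.1 q.1 := by
        intro E E' hkeep hde2 p q hpq
        rw [SimpleGraph.deleteEdges_adj] at hpq
        obtain ⟨hpq, hmem⟩ := hpq
        rw [hT'adj] at hpq
        rcases hpq with h | ⟨h1, h2⟩ | ⟨h1, h2⟩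
        · refine SimpleGraph.Adj.reachable ?_
          rw [SimpleGraph.deleteEdges_adj]
          exact ⟨h, hkeep _ _ h hmem⟩
        · have hpd : s(p, q) = s(d', e') := sym2_val_eq (by rw [h1, h2])
          rw [h1, h2]
          apply hde2
          rw [← hpd]
          exact hmem
        · have hpd : s(p, q) = s(e', d') := sym2_val_eq (by rw [h1, h2])
          rw [h1, h2]
          refine (hde2 fun hh => ?_).symm
          apply hmem
          rw [hpd]
          have : s(d', e') = s(e', d') := Sym2.eq_swap
          rw [← this]
          exact hh
      -- T' is a tree
      have hconn' : T'.Connected := by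
        have hpre : ∀ x y : {z : B // z ≠ b ∧ z ≠ c}, T'.Reachable x y := by
          intro x y
          have hr := hTree.isConnected.preconnected x.1 y.1
          have htr := reach_transfer f (fun p q hpq => hstep ∅ ∅
              (fun _ _ _ _ => Set.notMem_empty _) (fun _ => Set.notMem_empty _)
              (by rw [SimpleGraph.deleteEdges_adj]; exact ⟨hpq, Set.notMem_empty _⟩)) hr
          rw [SimpleGraph.deleteEdges_empty, hfval x.1 x.2, hfval y.1 y.2] at htr
          exact htr
        haveI : Nonempty {z : B // z ≠ b ∧ z ≠ c} := ⟨d'⟩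
        exact SimpleGraph.Connected.mk hpre
      have hacy' : T'.IsAcyclic := by
        rw [SimpleGraph.isAcyclic_iff_forall_adj_isBridge]
        intro x y hxy
        rw [SimpleGraph.isBridge_iff]
        intro hreach0
        have hreach : (T'.deleteEdges {s(x, y)}).Reachable x y := hreach0
        rcases (hT'adj x y).mp hxy with h | ⟨h1, h2⟩ | ⟨h1, h2⟩
        · apply tree_edge_not_reach hTree h
          refine reach_transfer Subtype.val (hdown {s(x.1, y.1)} {s(x, y)}
              (fun x0 y0 h0 hm0 hh => hm0 ?_) (fun hnin => ?_)) hreach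
          · rw [Set.mem_singleton_iff] at hh ⊢
            exact sym2_val_eq hh
          · -- path d - c - e avoiding the edge x.1y.1
            have hg1 : (T.deleteEdges {s(x.1, y.1)}).Adj d c := by
              rw [SimpleGraph.deleteEdges_adj]
              refine ⟨hcd.symm, fun hh => ?_⟩
              rw [Set.mem_singleton_iff, Sym2.eq_iff] at hh
              rcases hh with ⟨-, h2⟩ | ⟨-, h2⟩
              · exact y.2.2 h2.symm
              · exact x.2.2 h2.symm
            have hg2 : (T.deleteEdges {s(x.1, y.1)}).Adj c e := by
              rw [SimpleGraph.deleteEdges_adj]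
              refine ⟨hce, fun hh => ?_⟩
              rw [Set.mem_singleton_iff, Sym2.eq_iff] at hh
              rcases hh with ⟨h2, -⟩ | ⟨h2, -⟩
              · exact x.2.2 h2.symm
              · exact y.2.2 h2.symm
            exact hg1.reachable.trans hg2.reachable
        · -- the new edge
          have hx : x = d' := Subtype.ext h1
          have hy : y = e' := Subtype.ext h2
          rw [hx, hy] at hreach
          have hrde := reach_transfer Subtype.val (hdown {s(c, e)} {s(d', e')}
              (fun x0 y0 h0 hm0 hh => ?_) (fun hnin => absurd rfl hnin)) hreach
          · apply tree_edge_not_reach hTree hce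
            have hedge : (T.deleteEdges {s(c, e)}).Adj c d := by
              rw [SimpleGraph.deleteEdges_adj]
              refine ⟨hcd, fun hh => ?_⟩
              rw [Set.mem_singleton_iff, Sym2.eq_iff] at hh
              rcases hh with ⟨-, h2⟩ | ⟨h2, -⟩
              · exact hde h2
              · exact hec (by rw [← h2])
            exact hedge.reachable.trans hrde
          · rw [Set.mem_singleton_iff, Sym2.eq_iff] at hh
            rcases hh with ⟨hh1, -⟩ | ⟨-, hh2⟩
            · exact x0.2.2 hh1
            · exact y0.2.2 hh2
        · -- the new edge, reversed
          have hx : x = e' := Subtype.ext h1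
          have hy : y = d' := Subtype.ext h2
          rw [hx, hy] at hreach
          have hrde := reach_transfer Subtype.val (hdown {s(c, e)} {s(e', d')}
              (fun x0 y0 h0 hm0 hh => ?_)
              (fun hnin => absurd (show s(d', e') ∈ ({s(e', d')} : Set _) from Sym2.eq_swap)
                hnin)) hreach
          · apply tree_edge_not_reach hTree hce
            have hedge : (T.deleteEdges {s(c, e)}).Adj c d := by
              rw [SimpleGraph.deleteEdges_adj]
              refine ⟨hcd, fun hh => ?_⟩
              rw [Set.mem_singleton_iff, Sym2.eq_iff] at hh
              rcases hh with ⟨-, h2⟩ | ⟨h2, -⟩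
              · exact hde h2
              · exact hec (by rw [← h2])
            exact hedge.reachable.trans hrde.symm
          · rw [Set.mem_singleton_iff, Sym2.eq_iff] at hh
            rcases hh with ⟨hh1, -⟩ | ⟨-, hh2⟩
            · exact x0.2.2 hh1
            · exact y0.2.2 hh2
      -- degrees are preserved
      have hmem_img : ∀ (x : {z : B // z ≠ b ∧ z ≠ c}) (z : B),
          z ∈ Subtype.val '' (T'.neighborSet x) ↔
            ∃ hz : z ≠ b ∧ z ≠ c, T'.Adj x ⟨z, hz⟩ := by
        intro x z
        constructor
        · rintro ⟨z', hz', rfl⟩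
          exact ⟨z'.2, hz'⟩
        · rintro ⟨hz, ha⟩
          exact ⟨⟨z, hz⟩, ha, rfl⟩
      have himg_other : ∀ x : {z : B // z ≠ b ∧ z ≠ c}, x.1 ≠ d → x.1 ≠ e →
          Subtype.val '' (T'.neighborSet x) = T.neighborSet x.1 := by
        intro x hxd hxe
        ext z
        rw [hmem_img]
        constructor
        · rintro ⟨hz, ha⟩
          rcases (hT'adj _ _).mp ha with h | ⟨h1, -⟩ | ⟨h1, -⟩
          · exact h
          · exact absurd h1 hxd
          · exact absurd h1 hxe
        · intro hz
          have hzb : z ≠ b := by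
            rintro rfl
            exact x.2.2 (hnbrb _ ((SimpleGraph.mem_neighborSet _ _ _).mp hz).symm)
          have hzc : z ≠ c := by
            rintro rfl
            rcases hnbrcmem _ ((SimpleGraph.mem_neighborSet _ _ _).mp hz).symm with h | h | h
            · exact x.2.1 h
            · exact hxd h
            · exact hxe h
          exact ⟨⟨hzb, hzc⟩, (hT'adj _ _).mpr (Or.inl hz)⟩
      have himg_d : Subtype.val '' (T'.neighborSet d') = insert e (T.neighborSet d \ {c}) := by
        ext z
        rw [hmem_img]
        constructor
        · rintro ⟨hz, ha⟩
          rcases (hT'adj _ _).mp ha with h | ⟨-, h2⟩ | ⟨h1, -⟩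
          · exact Or.inr ⟨h, hz.2⟩
          · exact Or.inl h2
          · exact absurd h1 hde
        · rintro (rfl | ⟨hz1, hz2⟩)
          · exact ⟨⟨heb, hec⟩, (hT'adj _ _).mpr (Or.inr (Or.inl ⟨rfl, rfl⟩))⟩
          · have hzb : z ≠ b := by
              rintro rfl
              exact hdc (hnbrb _ ((SimpleGraph.mem_neighborSet _ _ _).mp hz1).symm)
            exact ⟨⟨hzb, hz2⟩, (hT'adj _ _).mpr (Or.inl hz1)⟩
      have himg_e : Subtype.val '' (T'.neighborSet e') = insert d (T.neighborSet e \ {c}) := by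
        ext z
        rw [hmem_img]
        constructor
        · rintro ⟨hz, ha⟩
          rcases (hT'adj _ _).mp ha with h | ⟨h1, -⟩ | ⟨-, h2⟩
          · exact Or.inr ⟨h, hz.2⟩
          · exact absurd h1 (fun hh => hde hh.symm)
          · exact Or.inl h2
        · rintro (rfl | ⟨hz1, hz2⟩)
          · exact ⟨⟨hdb, hdc⟩, (hT'adj _ _).mpr (Or.inr (Or.inr ⟨rfl, rfl⟩))⟩
          · have hzb : z ≠ b := by
              rintro rfl
              exact hec (hnbrb _ ((SimpleGraph.mem_neighborSet _ _ _).mp hz1).symm)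
            exact ⟨⟨hzb, hz2⟩, (hT'adj _ _).mpr (Or.inl hz1)⟩
      have hnbr' : ∀ x : {z : B // z ≠ b ∧ z ≠ c},
          (T'.neighborSet x).ncard = (T.neighborSet x.1).ncard := by
        intro x
        have hbase : (T'.neighborSet x).ncard = (Subtype.val '' (T'.neighborSet x)).ncard :=
          (Set.ncard_image_of_injective _ Subtype.val_injective).symm
        by_cases hxd : x.1 = d
        · have hx : x = d' := Subtype.ext hxd
          have him : Subtype.val '' (T'.neighborSet x) = insert e (T.neighborSet d \ {c}) := by
            rw [hx]; exact himg_d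
          rw [hbase, him, hxd]
          have henot : e ∉ T.neighborSet d \ {c} := fun hh => hnde hh.1
          rw [Set.ncard_insert_of_notMem henot (Set.toFinite _)]
          exact Set.ncard_diff_singleton_add_one (hcd.symm : c ∈ T.neighborSet d)
            (Set.toFinite _)
        · by_cases hxe : x.1 = e
          · have hx : x = e' := Subtype.ext hxe
            have him : Subtype.val '' (T'.neighborSet x) = insert d (T.neighborSet e \ {c}) := by
              rw [hx]; exact himg_e
            rw [hbase, him, hxe]
            have hdnot : d ∉ T.neighborSet e \ {c} := fun hh => hnde hh.1.symm
            rw [Set.ncard_insert_of_notMem hdnot (Set.toFinite _)]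
            exact Set.ncard_diff_singleton_add_one (hce.symm : c ∈ T.neighborSet e)
              (Set.toFinite _)
          · rw [hbase, himg_other x hxd hxe]
      have hsub' : ∀ x : {z : B // z ≠ b ∧ z ≠ c},
          (T'.neighborSet x).ncard = 1 ∨ (T'.neighborSet x).ncard = 3 := by
        intro x
        rw [hnbr']
        exact hsub x.1
      -- the new injection
      have hINV' : ∀ u w : {z : B // z ≠ b ∧ z ≠ c}, T'.Adj u w →
          mmVal H {x : W | (T'.deleteEdges {s(u, w)}).Reachable
            (⟨ι x, hιb x, hιc x⟩ : {z : B // z ≠ b ∧ z ≠ c}) u} ≤ k := by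
        intro u w huw
        rcases (hT'adj u w).mp huw with h0 | ⟨h1, h2⟩ | ⟨h1, h2⟩
        · have hseteq : {x : W | (T'.deleteEdges {s(u, w)}).Reachable
              (⟨ι x, hιb x, hιc x⟩ : {z : B // z ≠ b ∧ z ≠ c}) u}
              = {x : W | (T.deleteEdges {s(u.1, w.1)}).Reachable (ι x) u.1} := by
            ext x
            simp only [Set.mem_setOf_eq]
            constructor
            · intro hr
              exact reach_transfer Subtype.val (hdown {s(u.1, w.1)} {s(u, w)}
                (fun x0 y0 ha0 hm0 hh => hm0 (by
                  rw [Set.mem_singleton_iff] at hh ⊢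
                  exact sym2_val_eq hh))
                (fun hnin => by
                  have hg1 : (T.deleteEdges {s(u.1, w.1)}).Adj d c := by
                    rw [SimpleGraph.deleteEdges_adj]
                    refine ⟨hcd.symm, fun hh => ?_⟩
                    rw [Set.mem_singleton_iff, Sym2.eq_iff] at hh
                    rcases hh with ⟨-, hh2⟩ | ⟨-, hh2⟩
                    · exact w.2.2 hh2.symm
                    · exact u.2.2 hh2.symm
                  have hg2 : (T.deleteEdges {s(u.1, w.1)}).Adj c e := by
                    rw [SimpleGraph.deleteEdges_adj]
                    refine ⟨hce, fun hh => ?_⟩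
                    rw [Set.mem_singleton_iff, Sym2.eq_iff] at hh
                    rcases hh with ⟨hh2, -⟩ | ⟨hh2, -⟩
                    · exact u.2.2 hh2.symm
                    · exact w.2.2 hh2.symm
                  exact hg1.reachable.trans hg2.reachable)) hr
            · intro hr
              have htr := reach_transfer f (hstep {s(u.1, w.1)} {s(u, w)}
                (fun x0 y0 ha0 hm0 hh => hm0 (by
                  rw [Set.mem_singleton_iff] at hh ⊢
                  exact sym2_val_eq' hh))
                (fun _ hh => by
                  rw [Set.mem_singleton_iff] at hh
                  have hvals : s(d, e) = s(u.1, w.1) := sym2_val_eq' hh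
                  apply hnde
                  rw [Sym2.eq_iff] at hvals
                  rcases hvals with ⟨hv1, hv2⟩ | ⟨hv1, hv2⟩
                  · rw [hv1, hv2]; exact h0
                  · rw [hv1, hv2]; exact h0.symm)) hr
              rw [hfval (ι x) ⟨hιb x, hιc x⟩, hfval u.1 u.2] at htr
              exact htr
          rw [hseteq]
          exact hINV u.1 w.1 h0
        · have hu : u = d' := Subtype.ext h1
          have hw : w = e' := Subtype.ext h2
          rw [hu, hw]
          have hseteq : {x : W | (T'.deleteEdges {s(d', e')}).Reachable
              (⟨ι x, hιb x, hιc x⟩ : {z : B // z ≠ b ∧ z ≠ c}) d'}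
              = {x : W | (T.deleteEdges {s(c, e)}).Reachable (ι x) c} := by
            ext x
            simp only [Set.mem_setOf_eq]
            constructor
            · intro hr
              have hrd := reach_transfer Subtype.val (hdown {s(c, e)} {s(d', e')}
                (fun x0 y0 ha0 hm0 hh => by
                  rw [Set.mem_singleton_iff, Sym2.eq_iff] at hh
                  rcases hh with ⟨hh1, -⟩ | ⟨-, hh2⟩
                  · exact absurd hh1 x0.2.2
                  · exact absurd hh2 y0.2.2)
                (fun hnin => absurd rfl hnin)) hr
              have hedge : (T.deleteEdges {s(c, e)}).Adj d c := by
                rw [SimpleGraph.deleteEdges_adj]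
                refine ⟨hcd.symm, fun hh => ?_⟩
                rw [Set.mem_singleton_iff, Sym2.eq_iff] at hh
                rcases hh with ⟨hh2, -⟩ | ⟨hh2, -⟩
                · exact hdc hh2
                · exact hde hh2
              exact hrd.trans hedge.reachable
            · intro hr
              have htr := reach_transfer f (hstep {s(c, e)} {s(d', e')}
                (fun x0 y0 ha0 hm0 hh => by
                  rw [Set.mem_singleton_iff] at hh
                  have hvals : s(x0.1, y0.1) = s(d, e) := sym2_val_eq' hh
                  apply hnde
                  rw [Sym2.eq_iff] at hvals
                  rcases hvals with ⟨hv1, hv2⟩ | ⟨hv1, hv2⟩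
                  · rw [← hv1, ← hv2]; exact ha0
                  · rw [← hv1, ← hv2]; exact ha0.symm)
                (fun hcein => absurd rfl hcein)) hr
              rw [hfval (ι x) ⟨hιb x, hιc x⟩, hfc] at htr
              exact htr
          rw [hseteq]
          exact hINV c e hce
        · have hu : u = e' := Subtype.ext h1
          have hw : w = d' := Subtype.ext h2
          rw [hu, hw]
          have hseteq : {x : W | (T'.deleteEdges {s(e', d')}).Reachable
              (⟨ι x, hιb x, hιc x⟩ : {z : B // z ≠ b ∧ z ≠ c}) e'}
              = {x : W | (T.deleteEdges {s(e, c)}).Reachable (ι x) e} := by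
            ext x
            simp only [Set.mem_setOf_eq]
            constructor
            · intro hr
              exact reach_transfer Subtype.val (hdown {s(e, c)} {s(e', d')}
                (fun x0 y0 ha0 hm0 hh => by
                  rw [Set.mem_singleton_iff, Sym2.eq_iff] at hh
                  rcases hh with ⟨-, hh2⟩ | ⟨hh2, -⟩
                  · exact absurd hh2 y0.2.2
                  · exact absurd hh2 x0.2.2)
                (fun hnin => absurd (show s(d', e') ∈ ({s(e', d')} : Set _) from Sym2.eq_swap)
                  hnin)) hr
            · intro hr
              have htr := reach_transfer f (hstep {s(e, c)} {s(e', d')}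
                (fun x0 y0 ha0 hm0 hh => by
                  rw [Set.mem_singleton_iff] at hh
                  have hvals : s(x0.1, y0.1) = s(e, d) := sym2_val_eq' hh
                  apply hnde
                  rw [Sym2.eq_iff] at hvals
                  rcases hvals with ⟨hv1, hv2⟩ | ⟨hv1, hv2⟩
                  · rw [← hv1, ← hv2]; exact ha0.symm
                  · rw [← hv1, ← hv2]; exact ha0)
                (fun hcein => absurd (show s(c, e) ∈ ({s(e, c)} : Set _) from Sym2.eq_swap)
                  hcein)) hr
              rw [hfval (ι x) ⟨hιb x, hιc x⟩, hfval e ⟨heb, hec⟩] at htr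
              exact htr
          rw [hseteq]
          exact hINV e c hce.symm
      -- cardinality decreases
      have hcard' : Nat.card {z : B // z ≠ b ∧ z ≠ c} ≤ n := by
        have hlt : Nat.card {z : B // z ≠ b ∧ z ≠ c} < Nat.card B :=
          Finite.card_subtype_lt (x := b) (by simp)
        omega
      exact ih {z : B // z ≠ b ∧ z ≠ c} inferInstance T' hcard' ⟨hconn', hacy'⟩ hsub'
        (fun x => ⟨ι x, hιb x, hιc x⟩) (fun x y h => hinj (congrArg Subtype.val h))
        (fun x => by rw [hnbr']; exact hleaf x) hINV'

end Surgery

lemma exists_branchDecomp {V : Type} [Finite V] (G : SimpleGraph V) (hV : 2 ≤ Nat.card V) :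
    Nonempty (BranchDecomp G) := by
  classical
  obtain ⟨B, instB, T, hTree, hsub, hcard⟩ := exists_subcubic_tree (Nat.card V) hV
  haveI := instB
  have h2L := leaf_count hTree hsub
  have hcardB : Nat.card B = Fintype.card B := Nat.card_eq_fintype_card
  have hL : Nat.card {b : B // (T.neighborSet b).ncard = 1} = Nat.card V := by omega
  haveI : Fintype V := Fintype.ofFinite V
  haveI : Fintype {b : B // (T.neighborSet b).ncard = 1} := Fintype.ofFinite _
  have hE : Nonempty ({b : B // (T.neighborSet b).ncard = 1} ≃ V) := by
    rw [← Fintype.card_eq, ← Nat.card_eq_fintype_card, ← Nat.card_eq_fintype_card]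
    exact hL
  obtain ⟨L⟩ := hE
  exact ⟨⟨B, inferInstance, T, hTree, hsub, L⟩⟩

theorem mmw_minor_closed' (k : ℕ) :
    ∀ (V W : Type) [Finite V] [Finite W] (G : SimpleGraph V) (H : SimpleGraph W),
      IsMinor H G → mmw G ≤ k → mmw H ≤ k := by
  intro V W _ _ G H hminor hG
  classical
  by_cases hD : Nonempty (BranchDecomp H)
  · obtain ⟨D0⟩ := hD
    haveI := D0.finB
    haveI : Fintype D0.B := Fintype.ofFinite _
    have h2L := leaf_count D0.isTree D0.subcubic
    have hBpos : 1 ≤ Fintype.card D0.B := by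
      haveI : Nonempty D0.B := D0.isTree.isConnected.nonempty
      exact Fintype.card_pos
    have hWcard : Nat.card W
        = Nat.card {b : D0.B // (D0.T.neighborSet b).ncard = 1} :=
      (Nat.card_congr D0.L).symm
    have hW2 : 2 ≤ Nat.card W := by omega
    obtain ⟨φ, hne, hconn, hdisj, hadj⟩ := hminor
    let r : W → V := fun w => (hne w).some
    have hr : ∀ w, r w ∈ φ w := fun w => (hne w).some_mem
    have hrinj : Function.Injective r := by
      intro x y hxy
      by_contra hne2
      exact Set.disjoint_left.mp (hdisj x y hne2) (hr x) (hxy ▸ hr y)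
    have hV2 : 2 ≤ Nat.card V := le_trans hW2 (Nat.card_le_card_of_injective r hrinj)
    have hSne : (Nat.card V) ∈ {k' | ∃ D : BranchDecomp G, D.widthLE k'} := by
      obtain ⟨D⟩ := exists_branchDecomp G hV2
      exact ⟨D, fun u w _ => mmVal_le_card G _⟩
    have hmem := Nat.sInf_mem (⟨_, hSne⟩ :
      {k' | ∃ D : BranchDecomp G, D.widthLE k'}.Nonempty)
    obtain ⟨DG, hDG⟩ := hmem
    have hDGk : DG.widthLE k := fun u w huw => le_trans (hDG u w huw) hG
    haveI := DG.finB
    let ι : W → DG.B := fun x => (DG.L.symm (r x)).1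
    have hιinj : Function.Injective ι := by
      intro x y hxy
      exact hrinj (DG.L.symm.injective (Subtype.ext hxy))
    have hιleaf : ∀ x, (DG.T.neighborSet (ι x)).ncard = 1 := fun x => (DG.L.symm (r x)).2
    have hINV : ∀ u w : DG.B, DG.T.Adj u w →
        mmVal H {x : W | (DG.T.deleteEdges {s(u, w)}).Reachable (ι x) u} ≤ k := by
      intro u w huw
      have hkey : {x : W | (DG.T.deleteEdges {s(u, w)}).Reachable (ι x) u}
          = {x : W | r x ∈ DG.side u w} := rfl
      rw [hkey]
      exact le_trans (minor_cut φ hconn hdisj hadj r hr (DG.side u w)) (hDGk u w huw)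
    obtain ⟨D, hD⟩ := surgery H k hW2 (Nat.card DG.B) DG.B DG.finB DG.T le_rfl DG.isTree
      DG.subcubic ι hιinj hιleaf hINV
    exact Nat.sInf_le ⟨D, hD⟩
  · have hempty : {k' | ∃ D : BranchDecomp H, D.widthLE k'} = ∅ := by
      ext k'
      simp only [Set.mem_setOf_eq, Set.mem_empty_iff_false, iff_false]
      rintro ⟨D, -⟩
      exact hD ⟨D⟩
    show sInf {k' | ∃ D : BranchDecomp H, D.widthLE k'} ≤ k
    rw [hempty, Nat.sInf_empty]
    exact Nat.zero_le k

/-- graphs of mm-width at most `k` are closed under taking minors. -/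
theorem mmw_minor_closed (k : ℕ) :
    ∀ (V W : Type) [Finite V] [Finite W] (G : SimpleGraph V) (H : SimpleGraph W),
      IsMinor H G → mmw G ≤ k → mmw H ≤ k := mmw_minor_closed' k
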